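/- Let δ = d/dx on ℂ(x) and let f = a/b ∈ ℂ(x) with gcd(a, b) = 1 be differential-reduced, i.e., gcd(b, a − i·δ(b)) = 1 for all integers i. If g ∈ ℂ(x) satisfies b·δ(g) + a·g ∈ ℂ[x], then g ∈ ℂ[x]. Moreover, if f is differential-reduced then f + m·δ(b)/b is differential-reduced for every m ∈ ℤ, and δ(h) is differential-reduced for every h ∈ ℂ(x). -/

import Mathlib

open Polynomial


/-- A rational function `f ∈ ℂ(x)` with reduced representation `f = num/denom` is
differential-reduced (w.r.t. `d/dx`) if `gcd(denom, num − i·denom') = 1` for all `i ∈ ℤ`. -/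
def DiffReduced (f : RatFunc ℂ) : Prop :=
  ∀ i : ℤ, IsCoprime f.denom (f.num - (i : Polynomial ℂ) * Polynomial.derivative f.denom)



private lemma noCommonRoot {p q : Polynomial ℂ} (h : IsCoprime p q) {r : ℂ}
    (hp : p.eval r = 0) : q.eval r ≠ 0 := by
  obtain ⟨a, b, hab⟩ := h
  intro hq
  have := congrArg (Polynomial.eval r) hab
  simp [hp, hq] at this

private lemma coprime_of_roots {p q : Polynomial ℂ}
    (h : ∀ r : ℂ, p.eval r = 0 → q.eval r ≠ 0) : IsCoprime p q := by
  rw [Polynomial.isCoprime_iff_aeval_ne_zero_of_isAlgClosed (k := ℂ) ℂ]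
  intro a
  by_cases hp : p.eval a = 0
  · right; simpa using h a hp
  · left; simpa using hp

/-- factorization at a common root -/
private lemma fact_helper (u v : Polynomial ℂ) (hv : v ≠ 0) (r : ℂ)
    (hvr : v.eval r = 0) :
    ∃ (j : ℕ) (w t : Polynomial ℂ), v = (X - C r) ^ (j + 1) * w ∧ w.eval r ≠ 0 ∧
      derivative u * v - u * derivative v = (X - C r) ^ j * t ∧
      t.eval r = -((j : ℂ) + 1) * u.eval r * w.eval r := by
  obtain ⟨w, hw, hnd⟩ := v.exists_eq_pow_rootMultiplicity_mul_and_not_dvd hv r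
  have hk : 0 < v.rootMultiplicity r := (Polynomial.rootMultiplicity_pos hv).mpr hvr
  obtain ⟨j, hj⟩ : ∃ j, v.rootMultiplicity r = j + 1 := ⟨_, (Nat.succ_pred_eq_of_pos hk).symm⟩
  rw [hj] at hw
  have hwr : w.eval r ≠ 0 := fun h0 => hnd (Polynomial.dvd_iff_isRoot.mpr h0)
  refine ⟨j, w,
    derivative u * (X - C r) * w - u * (((j : Polynomial ℂ) + 1) * w + (X - C r) * derivative w),
    hw, hwr, ?_, ?_⟩
  · rw [hw, derivative_mul, derivative_pow, derivative_X_sub_C]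
    rw [pow_succ]
    push_cast
    ring_nf
    simp [Nat.add_sub_cancel]
    ring
  · simp
    ring

private lemma num_denom_of_coprime {p q : Polynomial ℂ} (hq : q.Monic) (h : IsCoprime p q) :
    (algebraMap (Polynomial ℂ) (RatFunc ℂ) p / algebraMap (Polynomial ℂ) (RatFunc ℂ) q).num = p ∧
    (algebraMap (Polynomial ℂ) (RatFunc ℂ) p / algebraMap (Polynomial ℂ) (RatFunc ℂ) q).denom = q := by
  set x := algebraMap (Polynomial ℂ) (RatFunc ℂ) p / algebraMap (Polynomial ℂ) (RatFunc ℂ) q with hx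
  have hq0 : q ≠ 0 := hq.ne_zero
  have hmm : x.num * q = p * x.denom := (RatFunc.num_mul_eq_mul_denom_iff hq0).mpr hx
  have hd1 : x.denom ∣ q := RatFunc.denom_div_dvd p q
  have hd2 : q ∣ x.denom := by
    have : q ∣ p * x.denom := ⟨x.num, by rw [← hmm]; ring⟩
    exact (h.symm).dvd_of_dvd_mul_left this
  have hden : x.denom = q :=
    Polynomial.eq_of_monic_of_associated (RatFunc.monic_denom x) hq (associated_of_dvd_dvd hd1 hd2)
  refine ⟨?_, hden⟩
  rw [hden] at hmm
  exact mul_right_cancel₀ hq0 hmm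

private lemma deriv_formula (δ : RatFunc ℂ → RatFunc ℂ)
    (hmul : ∀ a b : RatFunc ℂ, δ (a * b) = a * δ b + b * δ a)
    (hder : ∀ p : Polynomial ℂ,
      δ (algebraMap (Polynomial ℂ) (RatFunc ℂ) p) =
        algebraMap (Polynomial ℂ) (RatFunc ℂ) (Polynomial.derivative p))
    (g : RatFunc ℂ) :
    δ g * algebraMap (Polynomial ℂ) (RatFunc ℂ) g.denom ^ 2 =
      algebraMap (Polynomial ℂ) (RatFunc ℂ)
        (derivative g.num * g.denom - g.num * derivative g.denom) := by
  set φ := algebraMap (Polynomial ℂ) (RatFunc ℂ) with hφ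
  have hden : φ g.denom ≠ 0 := RatFunc.algebraMap_ne_zero (RatFunc.denom_ne_zero g)
  have e1 : g * φ g.denom = φ g.num :=
    ((div_eq_iff hden).mp (RatFunc.num_div_denom g)).symm
  have e2 := congrArg δ e1
  rw [hmul, hder, hder] at e2
  -- e2 : g * φ (derivative g.denom) + φ g.denom * δ g = φ (derivative g.num)
  have : δ g * φ g.denom ^ 2 =
      φ (derivative g.num) * φ g.denom - (g * φ g.denom) * φ (derivative g.denom) := by
    rw [← e2]; ring
  rw [this, e1, map_sub, map_mul, map_mul]

private lemma part1 (δ : RatFunc ℂ → RatFunc ℂ)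
    (hmul : ∀ a b : RatFunc ℂ, δ (a * b) = a * δ b + b * δ a)
    (hder : ∀ p : Polynomial ℂ,
      δ (algebraMap (Polynomial ℂ) (RatFunc ℂ) p) =
        algebraMap (Polynomial ℂ) (RatFunc ℂ) (Polynomial.derivative p))
    (f g : RatFunc ℂ) (hf : DiffReduced f)
    (hex : ∃ q : Polynomial ℂ,
        algebraMap (Polynomial ℂ) (RatFunc ℂ) f.denom * δ g +
          algebraMap (Polynomial ℂ) (RatFunc ℂ) f.num * g =
            algebraMap (Polynomial ℂ) (RatFunc ℂ) q) :
    ∃ q : Polynomial ℂ, g = algebraMap (Polynomial ℂ) (RatFunc ℂ) q := by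
  obtain ⟨q, hq⟩ := hex
  set φ := algebraMap (Polynomial ℂ) (RatFunc ℂ) with hφ
  have hinj := RatFunc.algebraMap_injective ℂ
  set a := f.num with ha
  set b := f.denom with hb
  set u := g.num with hu
  set v := g.denom with hv
  have hformula := deriv_formula δ hmul hder g
  have hden : φ v ≠ 0 := RatFunc.algebraMap_ne_zero (RatFunc.denom_ne_zero g)
  have e1 : g * φ v = φ u :=
    ((div_eq_iff hden).mp (RatFunc.num_div_denom g)).symm
  have hpoly : b * (derivative u * v - u * derivative v) + a * (u * v) = q * v ^ 2 := by
    apply hinj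
    have expand : φ (b * (derivative u * v - u * derivative v) + a * (u * v)) =
        φ b * φ (derivative u * v - u * derivative v) + φ a * (φ u * φ v) := by
      push_cast [map_add, map_mul]; ring
    have expand2 : φ (q * v ^ 2) = φ q * φ v ^ 2 := by push_cast [map_mul, map_pow]; ring
    rw [expand, expand2, ← hformula, ← e1]
    linear_combination φ v ^ 2 * hq
  by_cases hv1 : v = 1
  · refine ⟨u, ?_⟩
    rw [← RatFunc.num_div_denom g, ← hu, ← hv, hv1, map_one, div_one]
  exfalso
  have hmon : v.Monic := RatFunc.monic_denom g
  have hdeg : v.degree ≠ 0 := by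
    intro h0
    exact hv1 (hmon.natDegree_eq_zero.mp
      (Polynomial.natDegree_eq_zero_iff_degree_le_zero.mpr (le_of_eq h0)))
  obtain ⟨r, hr⟩ := IsAlgClosed.exists_root v hdeg
  have hvr : v.eval r = 0 := hr
  have hur : u.eval r ≠ 0 := noCommonRoot (RatFunc.isCoprime_num_denom g).symm hvr
  obtain ⟨j, w, t, hw, hwr, hs, htval⟩ := fact_helper u v (RatFunc.denom_ne_zero g) r hvr
  rw [hs, hw] at hpoly
  have hXne : (X - C r) ≠ 0 := Polynomial.X_sub_C_ne_zero r
  have E : b * t + (X - C r) * (a * (u * w)) = (X - C r) ^ (j + 2) * (q * w ^ 2) :=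
    mul_left_cancel₀ (pow_ne_zero j hXne) (by linear_combination hpoly)
  have hbr : b.eval r = 0 := by
    have he := congrArg (Polynomial.eval r) E
    have htr : t.eval r ≠ 0 := by
      rw [htval]
      exact mul_ne_zero (mul_ne_zero (neg_ne_zero.mpr (Nat.cast_add_one_ne_zero j)) hur) hwr
    simp at he
    rcases he with he | he
    · exact he
    · exact absurd he htr
  obtain ⟨c, hc⟩ := Polynomial.dvd_iff_isRoot.mpr hbr
  have E2 : (X - C r) ^ (j + 1) * (q * w ^ 2) = c * t + a * (u * w) := by
    apply mul_left_cancel₀ hXne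
    rw [hc] at E
    linear_combination -E
  have hb' : (derivative b).eval r = c.eval r := by
    rw [hc]
    simp [derivative_mul]
  have heval := congrArg (Polynomial.eval r) E2
  simp [htval] at heval
  -- heval : 0 = c(r) * (-(j+1) u(r) w(r)) + a(r) * (u(r) * w(r))  (roughly)
  have key : (a.eval r - ((j : ℂ) + 1) * c.eval r) * (u.eval r * w.eval r) = 0 := by
    linear_combination -heval
  have hzero : a.eval r - ((j : ℂ) + 1) * c.eval r = 0 := by
    rcases mul_eq_zero.mp key with h | h
    · exact h
    · exact absurd h (mul_ne_zero hur hwr)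
  have hcop := hf ((j : ℤ) + 1)
  apply noCommonRoot hcop hbr
  simp [hb']
  have hb'' : (derivative f.denom).eval r = c.eval r := hb'
  linear_combination hzero - ((j : ℂ) + 1) * hb''

private lemma part2 (f : RatFunc ℂ) (hf : DiffReduced f) (m : ℤ) :
    DiffReduced (f + (m : RatFunc ℂ) *
      algebraMap (Polynomial ℂ) (RatFunc ℂ) (Polynomial.derivative f.denom) /
        algebraMap (Polynomial ℂ) (RatFunc ℂ) f.denom) := by
  set φ := algebraMap (Polynomial ℂ) (RatFunc ℂ) with hφ
  set a := f.num with ha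
  set b := f.denom with hb
  have hden : φ b ≠ 0 := RatFunc.algebraMap_ne_zero (RatFunc.denom_ne_zero f)
  have hco : IsCoprime b (a + (m : Polynomial ℂ) * derivative b) := by
    have h := hf (-m)
    have : a - ((-m : ℤ) : Polynomial ℂ) * derivative b
        = a + (m : Polynomial ℂ) * derivative b := by push_cast; ring
    rwa [this] at h
  have hE : f + (m : RatFunc ℂ) * φ (derivative b) / φ b
      = φ (a + (m : Polynomial ℂ) * derivative b) / φ b := by
    have hm : (m : RatFunc ℂ) = φ ((m : Polynomial ℂ)) := (map_intCast φ m).symm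
    rw [map_add, map_mul, hm]
    rw [add_div, ← RatFunc.num_div_denom f, ← ha, ← hb]
  obtain ⟨hnum, hdenom⟩ := num_denom_of_coprime (hb ▸ RatFunc.monic_denom f) hco.symm
  rw [hE]
  intro i
  rw [hnum, hdenom]
  have h := hf (i - m)
  have : a - ((i - m : ℤ) : Polynomial ℂ) * derivative b
      = a + (m : Polynomial ℂ) * derivative b - (i : Polynomial ℂ) * derivative b := by
    push_cast; ring
  rwa [this] at h

private lemma part3 (δ : RatFunc ℂ → RatFunc ℂ)
    (hmul : ∀ a b : RatFunc ℂ, δ (a * b) = a * δ b + b * δ a)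
    (hder : ∀ p : Polynomial ℂ,
      δ (algebraMap (Polynomial ℂ) (RatFunc ℂ) p) =
        algebraMap (Polynomial ℂ) (RatFunc ℂ) (Polynomial.derivative p))
    (h : RatFunc ℂ) : DiffReduced (δ h) := by
  set φ := algebraMap (Polynomial ℂ) (RatFunc ℂ) with hφ
  have hinj := RatFunc.algebraMap_injective ℂ
  set u := h.num with hu
  set v := h.denom with hv
  set A := (δ h).num with hA
  set B := (δ h).denom with hB
  have hformula := deriv_formula δ hmul hder h
  have hBden : φ B ≠ 0 := RatFunc.algebraMap_ne_zero (RatFunc.denom_ne_zero (δ h))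
  have eδ : φ A = δ h * φ B := (div_eq_iff hBden).mp (RatFunc.num_div_denom (δ h))
  have hid : A * v ^ 2 = (derivative u * v - u * derivative v) * B := by
    apply hinj
    have : φ (A * v ^ 2) = φ A * φ v ^ 2 := by rw [map_mul, map_pow]
    rw [this, map_mul, eδ]
    linear_combination φ B * hformula
  intro i
  apply coprime_of_roots
  intro r hBr
  have hAr : A.eval r ≠ 0 := noCommonRoot (RatFunc.isCoprime_num_denom (δ h)).symm hBr
  have hvr : v.eval r = 0 := by
    have he := congrArg (Polynomial.eval r) hid
    simp [show B.eval r = 0 from hBr] at he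
    rcases he with he | he
    · exact absurd he hAr
    · exact he
  have hur : u.eval r ≠ 0 := noCommonRoot (RatFunc.isCoprime_num_denom h).symm hvr
  obtain ⟨j, w, t, hw, hwr, hs, htval⟩ := fact_helper u v (RatFunc.denom_ne_zero h) r hvr
  have htr : t.eval r ≠ 0 := by
    rw [htval]
    exact mul_ne_zero (mul_ne_zero (neg_ne_zero.mpr (Nat.cast_add_one_ne_zero j)) hur) hwr
  have hXne : (X - C r) ≠ 0 := Polynomial.X_sub_C_ne_zero r
  rw [hs, hw] at hid
  have E : (X - C r) ^ (j + 2) * (A * w ^ 2) = t * B :=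
    mul_left_cancel₀ (pow_ne_zero j hXne) (by linear_combination hid)
  have hdvd : (X - C r) ^ (j + 2) ∣ B := by
    refine (Polynomial.prime_X_sub_C r).pow_dvd_of_dvd_mul_left (j + 2) ?_ ⟨A * w ^ 2, E.symm⟩
    rw [Polynomial.dvd_iff_isRoot]
    exact htr
  obtain ⟨d, hd⟩ : (X - C r) ^ 2 ∣ B := dvd_trans (pow_dvd_pow _ (by omega)) hdvd
  have hB'r : (derivative B).eval r = 0 := by
    rw [hd, derivative_mul, derivative_pow]
    simp
  intro hzero
  apply hAr
  simp [show (derivative (δ h).denom).eval r = 0 from hB'r] at hzero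
  exact hzero

/-- Properties of differential-reduced rational functions over `(ℂ(x), d/dx)`:
(1) if `f` is differential-reduced and `b·δ(g) + a·g` is a polynomial (where
`f = a/b` in lowest terms), then `g` is a polynomial; (2) if `f` is
differential-reduced then so is `f + m·δ(b)/b` for every `m ∈ ℤ`; (3) `δ h` is
differential-reduced for every `h ∈ ℂ(x)`. -/
theorem stmt18 (δ : RatFunc ℂ → RatFunc ℂ)
    (hadd : ∀ a b : RatFunc ℂ, δ (a + b) = δ a + δ b)
    (hmul : ∀ a b : RatFunc ℂ, δ (a * b) = a * δ b + b * δ a)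
    (hder : ∀ p : Polynomial ℂ,
      δ (algebraMap (Polynomial ℂ) (RatFunc ℂ) p) =
        algebraMap (Polynomial ℂ) (RatFunc ℂ) (Polynomial.derivative p)) :
    (∀ f g : RatFunc ℂ, DiffReduced f →
      (∃ q : Polynomial ℂ,
        algebraMap (Polynomial ℂ) (RatFunc ℂ) f.denom * δ g +
          algebraMap (Polynomial ℂ) (RatFunc ℂ) f.num * g =
            algebraMap (Polynomial ℂ) (RatFunc ℂ) q) →
      ∃ q : Polynomial ℂ, g = algebraMap (Polynomial ℂ) (RatFunc ℂ) q) ∧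
    (∀ f : RatFunc ℂ, DiffReduced f → ∀ m : ℤ,
      DiffReduced (f + (m : RatFunc ℂ) *
        algebraMap (Polynomial ℂ) (RatFunc ℂ) (Polynomial.derivative f.denom) /
          algebraMap (Polynomial ℂ) (RatFunc ℂ) f.denom)) ∧
    (∀ h : RatFunc ℂ, DiffReduced (δ h)) :=
  ⟨fun f g hf hex => part1 δ hmul hder f g hf hex,
   fun f hf m => part2 f hf m,
   fun h => part3 δ hmul hder h⟩
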